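/- arXiv:2603.13156 — 2 statements merged into one kernel-verified Lean document; each statement's English description precedes it below -/
import Mathlib

section
/- Let B ≥ 1, and let m, n ≥ 0 be integers. Let A_1, ..., A_B be nonnegative integers with Σ_b A_b = m (pre-shift bin counts), and define q̂_b = (1 + A_b)/(B + m). Let θ = (θ_1, ..., θ_B) be a probability vector, and let C_1, ..., C_B be the bin counts of n i.i.d. draws landing in bin b with probability θ_b (multinomial(n, θ)); let the next draw fall in bin b independently with probability θ_b, and set e = B · (1 + A_b + C_b)/(B + m + n) where b is the bin of the next draw. Define γ = B Σ_b θ_b q̂_b − 1 and δ = Σ_b θ_b² − 1/B. Then E[e | A_1, ..., A_B] = 1 + ((B + m)/(B + m + n)) γ + (n/(B + m + n)) B δ. -/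
open MeasureTheory ProbabilityTheory

/-- Finite-time mean gain of the histogram betting scheme: with pre-shift counts `A_b`
summing to `m`, post-shift counts `C_b` from `n` i.i.d. draws with bin probabilities `θ`,
and a further independent draw with the same law, the e-value
`e = B(1 + A_b + C_b)/(B + m + n)` evaluated at the bin `b` of the new draw satisfies
`E[e] = 1 + ((B+m)/(B+m+n))γ + (n/(B+m+n))Bδ`. -/
theorem finite_time_mean_gain
    {Ω : Type*} [MeasurableSpace Ω] (μ : Measure Ω) [IsProbabilityMeasure μ]
    (B m n : ℕ) (hB : 1 ≤ B)
    (A : Fin B → ℕ) (hA : ∑ b, A b = m)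
    (θ : Fin B → ℝ) (hθ_nonneg : ∀ b, 0 ≤ θ b) (hθ_sum : ∑ b, θ b = 1)
    (X : Fin (n + 1) → Ω → Fin B) (hX_meas : ∀ i, Measurable (X i))
    (hX_indep : iIndepFun X μ)
    (hX_law : ∀ i b, μ {ω | X i ω = b} = ENNReal.ofReal (θ b))
    (γ δ : ℝ)
    (hγ : γ = (B : ℝ) * (∑ b, θ b * ((1 + (A b : ℝ)) / ((B : ℝ) + m))) - 1)
    (hδ : δ = (∑ b, θ b ^ 2) - 1 / B) :
    ∫ ω, (B : ℝ) *
        (1 + (A (X (Fin.last n) ω) : ℝ) +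
          ((Finset.univ.filter fun i : Fin n =>
            X i.castSucc ω = X (Fin.last n) ω).card : ℝ)) / ((B : ℝ) + m + n) ∂μ
      = 1 + ((B + m : ℝ) / ((B : ℝ) + m + n)) * γ
          + ((n : ℝ) / ((B : ℝ) + m + n)) * ((B : ℝ) * δ) := by
  classical
  set Y : Ω → Fin B := X (Fin.last n) with hYdef
  have hBpos : (0:ℝ) < B := by exact_mod_cast Nat.lt_of_lt_of_le Nat.zero_lt_one hB
  have hBm : (0:ℝ) < (B:ℝ) + m := by positivity
  have hBmn : (0:ℝ) < (B:ℝ) + m + n := by positivity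
  -- measurable sets
  have hsetY : ∀ b : Fin B, MeasurableSet {ω | Y ω = b} := fun b =>
    (hX_meas (Fin.last n)) (measurableSet_singleton b)
  have hsetXi : ∀ (i : Fin n) (b : Fin B), MeasurableSet {ω | X i.castSucc ω = b} := fun i b =>
    (hX_meas i.castSucc) (measurableSet_singleton b)
  -- indicator functions
  -- F b ω = if Y ω = b
  have hFeq : ∀ b : Fin B, (fun ω => if Y ω = b then (1:ℝ) else 0)
      = Set.indicator {ω | Y ω = b} (fun _ => (1:ℝ)) := by
    intro b; funext ω; simp [Set.indicator_apply]
  have hFint : ∀ b : Fin B, Integrable (fun ω => if Y ω = b then (1:ℝ) else 0) μ := by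
    intro b; rw [hFeq b]
    exact (integrable_const (1:ℝ)).indicator (hsetY b)
  have hFval : ∀ b : Fin B, ∫ ω, (if Y ω = b then (1:ℝ) else 0) ∂μ = θ b := by
    intro b
    rw [hFeq b, integral_indicator_const (1:ℝ) (hsetY b)]
    simp [Measure.real, hYdef, hX_law (Fin.last n) b, ENNReal.toReal_ofReal (hθ_nonneg b)]
  -- G i b ω = if X i.castSucc ω = b ∧ Y ω = b
  have hGset : ∀ (i : Fin n) (b : Fin B),
      {ω | X i.castSucc ω = b ∧ Y ω = b}
        = (X i.castSucc) ⁻¹' {b} ∩ Y ⁻¹' {b} := by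
    intro i b; ext ω; simp [Set.mem_inter_iff]
  have hGmeas : ∀ (i : Fin n) (b : Fin B),
      MeasurableSet {ω | X i.castSucc ω = b ∧ Y ω = b} := by
    intro i b; rw [hGset]
    exact ((hX_meas i.castSucc) (measurableSet_singleton b)).inter
      ((hX_meas (Fin.last n)) (measurableSet_singleton b))
  have hGeq : ∀ (i : Fin n) (b : Fin B),
      (fun ω => if X i.castSucc ω = b ∧ Y ω = b then (1:ℝ) else 0)
        = Set.indicator {ω | X i.castSucc ω = b ∧ Y ω = b} (fun _ => (1:ℝ)) := by
    intro i b; funext ω; simp [Set.indicator_apply]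
  have hGint : ∀ (i : Fin n) (b : Fin B),
      Integrable (fun ω => if X i.castSucc ω = b ∧ Y ω = b then (1:ℝ) else 0) μ := by
    intro i b; rw [hGeq i b]
    exact (integrable_const (1:ℝ)).indicator (hGmeas i b)
  have hGmeasure : ∀ (i : Fin n) (b : Fin B),
      μ {ω | X i.castSucc ω = b ∧ Y ω = b}
        = ENNReal.ofReal (θ b) * ENNReal.ofReal (θ b) := by
    intro i b
    have hne : i.castSucc ≠ Fin.last n := (Fin.castSucc_lt_last i).ne
    have hind : IndepFun (X i.castSucc) (X (Fin.last n)) μ :=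
      hX_indep.indepFun hne
    rw [hGset i b, hind.measure_inter_preimage_eq_mul _ _
      (measurableSet_singleton b) (measurableSet_singleton b)]
    have h1 : X i.castSucc ⁻¹' {b} = {ω | X i.castSucc ω = b} := by ext ω; simp
    have h2 : X (Fin.last n) ⁻¹' {b} = {ω | X (Fin.last n) ω = b} := by ext ω; simp
    rw [h1, h2, hX_law, hX_law]
  have hGval : ∀ (i : Fin n) (b : Fin B),
      ∫ ω, (if X i.castSucc ω = b ∧ Y ω = b then (1:ℝ) else 0) ∂μ = θ b * θ b := by
    intro i b
    rw [hGeq i b, integral_indicator_const (1:ℝ) (hGmeas i b), Measure.real, hGmeasure i b]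
    simp [ENNReal.toReal_mul, ENNReal.toReal_ofReal (hθ_nonneg b)]
  -- pointwise rewrite of the integrand
  have key : ∀ ω, (B : ℝ) *
        (1 + (A (X (Fin.last n) ω) : ℝ) +
          ((Finset.univ.filter fun i : Fin n =>
            X i.castSucc ω = X (Fin.last n) ω).card : ℝ)) / ((B : ℝ) + m + n)
      = (∑ b : Fin B, ((B:ℝ) * (1 + (A b : ℝ)) / ((B:ℝ) + m + n))
            * (if Y ω = b then (1:ℝ) else 0))
        + ∑ i : Fin n, ∑ b : Fin B, ((B:ℝ) / ((B:ℝ) + m + n))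
            * (if X i.castSucc ω = b ∧ Y ω = b then (1:ℝ) else 0) := by
    intro ω
    have hcard : ((Finset.univ.filter fun i : Fin n =>
        X i.castSucc ω = Y ω).card : ℝ)
        = ∑ i : Fin n, (if X i.castSucc ω = Y ω then (1:ℝ) else 0) := by
      rw [Finset.card_filter]
      push_cast
      exact Finset.sum_congr rfl (fun i _ => by split <;> simp
        )
    have h1 : (∑ b : Fin B, ((B:ℝ) * (1 + (A b : ℝ)) / ((B:ℝ) + m + n))
          * (if Y ω = b then (1:ℝ) else 0))
        = (B:ℝ) * (1 + (A (Y ω) : ℝ)) / ((B:ℝ) + m + n) := by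
      rw [Finset.sum_eq_single (Y ω)]
      · simp
      · intro b _ hb; simp [Ne.symm hb]
      · simp
    have h2 : ∀ i : Fin n, (∑ b : Fin B, ((B:ℝ) / ((B:ℝ) + m + n))
          * (if X i.castSucc ω = b ∧ Y ω = b then (1:ℝ) else 0))
        = ((B:ℝ) / ((B:ℝ) + m + n)) * (if X i.castSucc ω = Y ω then (1:ℝ) else 0) := by
      intro i
      rcases eq_or_ne (X i.castSucc ω) (Y ω) with h | h
      · rw [Finset.sum_eq_single (Y ω)]
        · simp [h]
        · intro b _ hb; simp [Ne.symm hb]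
        · simp
      · rw [Finset.sum_eq_zero, if_neg h, mul_zero]
        intro b _
        have : ¬(X i.castSucc ω = b ∧ Y ω = b) := by
          rintro ⟨h1', h2'⟩; exact h (h1'.trans h2'.symm)
        simp [this]
    simp only [h1, h2, ← hYdef]
    rw [hcard, mul_add, add_div]
    congr 1
    rw [Finset.mul_sum, Finset.sum_div]
    exact Finset.sum_congr rfl (fun i _ => by ring)
  rw [integral_congr_ae (Filter.Eventually.of_forall key)]
  have hFint' : Integrable (fun ω => ∑ b : Fin B,
      ((B:ℝ) * (1 + (A b : ℝ)) / ((B:ℝ) + m + n)) * (if Y ω = b then (1:ℝ) else 0)) μ :=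
    integrable_finset_sum _ (fun b _ => (hFint b).const_mul _)
  have hGint' : Integrable (fun ω => ∑ i : Fin n, ∑ b : Fin B,
      ((B:ℝ) / ((B:ℝ) + m + n)) * (if X i.castSucc ω = b ∧ Y ω = b then (1:ℝ) else 0)) μ :=
    integrable_finset_sum _ (fun i _ =>
      integrable_finset_sum _ (fun b _ => (hGint i b).const_mul _))
  rw [integral_add hFint' hGint', integral_finset_sum _ (fun b _ => (hFint b).const_mul _),
    integral_finset_sum _ (fun i _ =>
      integrable_finset_sum _ (fun b _ => (hGint i b).const_mul _))]
  have hGsum : ∀ i : Fin n, ∫ ω, (∑ b : Fin B, ((B:ℝ) / ((B:ℝ) + m + n))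
      * (if X i.castSucc ω = b ∧ Y ω = b then (1:ℝ) else 0)) ∂μ
      = ((B:ℝ) / ((B:ℝ) + m + n)) * ∑ b : Fin B, θ b ^ 2 := by
    intro i
    rw [integral_finset_sum _ (fun b _ => (hGint i b).const_mul _), Finset.mul_sum]
    exact Finset.sum_congr rfl (fun b _ => by rw [integral_const_mul, hGval i b, pow_two])
  simp_rw [integral_const_mul, hFval, hGsum]
  rw [Finset.sum_const, Finset.card_univ, Fintype.card_fin, nsmul_eq_mul]
  -- arithmetic
  set S : ℝ := ∑ b : Fin B, θ b * (1 + (A b : ℝ)) with hS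
  set Q : ℝ := ∑ b : Fin B, θ b ^ 2 with hQ
  have hL : (∑ b : Fin B, ((B:ℝ) * (1 + (A b : ℝ)) / ((B:ℝ) + m + n)) * θ b)
      = (B:ℝ) / ((B:ℝ) + m + n) * S := by
    rw [hS, Finset.mul_sum]
    exact Finset.sum_congr rfl (fun b _ => by ring)
  have hγ' : γ = (B:ℝ) * (S / ((B:ℝ) + m)) - 1 := by
    rw [hγ, hS, Finset.sum_div]
    congr 2
    exact Finset.sum_congr rfl (fun b _ => by ring)
  rw [hL, hγ', hδ]
  field_simp
  ring
end

section
/- Let (F_t)_{t≥0} be a filtration and (e_t)_{t≥1} nonnegative integrable adapted random variables with E[e_t | F_{t−1}] ≤ 1 almost surely for every t. Define the mixture e-process M_t = Σ_{τ=1}^{t} w_τ ∏_{s=τ}^{t} e_s with weights w_τ = 1/(τ(τ+1)). Then for every α ∈ (0, 1], P(sup_{t≥1} M_t ≥ 1/α) ≤ α. -/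
open MeasureTheory Filter

lemma pitmonitor_mul_integrable {Ω : Type*} {m0 : MeasurableSpace Ω} {μ : Measure Ω}
    [IsProbabilityMeasure μ] {m : MeasurableSpace Ω} (hm : m ≤ m0) {g h : Ω → ℝ}
    (hg_meas : StronglyMeasurable[m] g) (hg_nonneg : ∀ ω, 0 ≤ g ω) (hg_int : Integrable g μ)
    (hh_nonneg : ∀ ω, 0 ≤ h ω) (hh_int : Integrable h μ)
    (hcond : μ[h|m] ≤ᵐ[μ] fun _ => 1) : Integrable (fun ω => g ω * h ω) μ := by
  have hgm : AEStronglyMeasurable[m0] g μ := (hg_meas.mono hm).aestronglyMeasurable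
  have hmeas : AEStronglyMeasurable[m0] (fun ω => g ω * h ω) μ := hgm.mul hh_int.1
  set gn : ℕ → Ω → ℝ := fun n ω => min (g ω) n with hgn_def
  have hgn_meas : ∀ n, StronglyMeasurable[m] (gn n) := fun n =>
    hg_meas.inf stronglyMeasurable_const
  have hgn_nonneg : ∀ n ω, 0 ≤ gn n ω := fun n ω => le_min (hg_nonneg ω) (n.cast_nonneg)
  have hgnh_int : ∀ n, Integrable (fun ω => gn n ω * h ω) μ := fun n =>
    hh_int.bdd_mul (c := n) ((hgn_meas n).mono hm).aestronglyMeasurable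
      (ae_of_all _ fun ω => by
        rw [Real.norm_eq_abs, abs_of_nonneg (hgn_nonneg n ω)]
        exact min_le_right _ _)
  -- integral bound
  have hbound : ∀ n, ∫ ω, gn n ω * h ω ∂μ ≤ ∫ ω, g ω ∂μ := by
    intro n
    have h1 : ∫ ω, gn n ω * h ω ∂μ = ∫ ω, (μ[fun ω => gn n ω * h ω|m]) ω ∂μ :=
      (integral_condExp hm).symm
    have h2 : μ[fun ω => gn n ω * h ω|m] =ᵐ[μ] fun ω => gn n ω * (μ[h|m]) ω :=
      condExp_mul_of_stronglyMeasurable_left (hgn_meas n) (hgnh_int n) hh_int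
    rw [h1, integral_congr_ae h2]
    have hgn_int : Integrable (gn n) μ :=
      hg_int.mono ((hgn_meas n).mono hm).aestronglyMeasurable
        (Eventually.of_forall fun ω => by
          simp only [Real.norm_eq_abs, abs_of_nonneg (hgn_nonneg n ω),
            abs_of_nonneg (hg_nonneg ω)]
          exact min_le_left _ _)
    have hstep : ∫ ω, gn n ω * (μ[h|m]) ω ∂μ ≤ ∫ ω, gn n ω ∂μ := by
      refine integral_mono_ae ?_ hgn_int ?_
      · exact integrable_condExp.bdd_mul (c := n) ((hgn_meas n).mono hm).aestronglyMeasurable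
          (ae_of_all _ fun ω => by
            rw [Real.norm_eq_abs, abs_of_nonneg (hgn_nonneg n ω)]
            exact min_le_right _ _)
      · filter_upwards [hcond] with ω hω
        calc gn n ω * (μ[h|m]) ω ≤ gn n ω * 1 :=
              mul_le_mul_of_nonneg_left hω (hgn_nonneg n ω)
          _ = gn n ω := mul_one _
    refine hstep.trans (integral_mono_ae hgn_int hg_int ?_)
    exact Eventually.of_forall fun ω => min_le_left _ _
  refine ⟨hmeas, ?_⟩
  have hnn : 0 ≤ᵐ[μ] fun ω => g ω * h ω :=
    Eventually.of_forall fun ω => mul_nonneg (hg_nonneg ω) (hh_nonneg ω)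
  rw [hasFiniteIntegral_iff_ofReal hnn]
  have hsup : ∀ ω, ⨆ n : ℕ, ENNReal.ofReal (gn n ω * h ω) = ENNReal.ofReal (g ω * h ω) := by
    intro ω
    have hmono : Monotone fun n : ℕ => ENNReal.ofReal (gn n ω * h ω) := fun a b hab =>
      ENNReal.ofReal_le_ofReal (mul_le_mul_of_nonneg_right
        (min_le_min le_rfl (Nat.cast_le.2 hab)) (hh_nonneg ω))
    refine le_antisymm (iSup_le fun n => ENNReal.ofReal_le_ofReal
      (mul_le_mul_of_nonneg_right (min_le_left _ _) (hh_nonneg ω))) ?_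
    have : gn ⌈g ω⌉₊ ω = g ω := min_eq_left (Nat.le_ceil _)
    calc ENNReal.ofReal (g ω * h ω) = ENNReal.ofReal (gn ⌈g ω⌉₊ ω * h ω) := by rw [this]
      _ ≤ ⨆ n : ℕ, ENNReal.ofReal (gn n ω * h ω) := le_iSup (fun n : ℕ => ENNReal.ofReal (gn n ω * h ω)) ⌈g ω⌉₊
  have hml : ∀ᵐ ω ∂μ, Monotone fun n : ℕ => ENNReal.ofReal (gn n ω * h ω) :=
    Eventually.of_forall fun ω a b hab =>
      ENNReal.ofReal_le_ofReal (mul_le_mul_of_nonneg_right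
        (min_le_min le_rfl (Nat.cast_le.2 hab)) (hh_nonneg ω))
  have key : ∫⁻ ω, ENNReal.ofReal (g ω * h ω) ∂μ
      = ⨆ n : ℕ, ∫⁻ ω, ENNReal.ofReal (gn n ω * h ω) ∂μ := by
    rw [← lintegral_iSup' (fun n => ((hgnh_int n).1.aemeasurable).ennreal_ofReal) hml]
    exact lintegral_congr fun ω => (hsup ω).symm
  rw [key]
  refine lt_of_le_of_lt (iSup_le fun n => ?_) (ENNReal.ofReal_lt_top (r := ∫ ω, g ω ∂μ))
  rw [← ofReal_integral_eq_lintegral_ofReal (hgnh_int n)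
    (Eventually.of_forall fun ω => mul_nonneg (hgn_nonneg n ω) (hh_nonneg ω))]
  exact ENNReal.ofReal_le_ofReal (hbound n)


lemma pitmonitor_ville {Ω : Type*} {m0 : MeasurableSpace Ω} {μ : Measure Ω}
    [IsProbabilityMeasure μ] {𝒢 : Filtration ℕ m0} {f : ℕ → Ω → ℝ}
    (hf : Supermartingale f 𝒢 μ) (hnonneg : ∀ t ω, 0 ≤ f t ω) {ε : ℝ} (hε : 0 < ε) :
    μ {ω | ∃ t : ℕ, ε ≤ f t ω} ≤ ENNReal.ofReal ((∫ ω, f 0 ω ∂μ) / ε) := by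
  set A : ℕ → Set Ω := fun n => {ω | ∃ k ≤ n, ε ≤ f k ω} with hA_def
  have hA_meas : ∀ n, MeasurableSet (A n) := by
    intro n
    have : A n = ⋃ k ∈ Finset.range (n + 1), {ω | ε ≤ f k ω} := by
      ext ω
      simp only [hA_def, Set.mem_setOf_eq, Set.mem_iUnion, Finset.mem_range, Nat.lt_succ_iff]
      exact ⟨fun ⟨k, hk, h⟩ => ⟨k, hk, h⟩, fun ⟨k, hk, h⟩ => ⟨k, hk, h⟩⟩
    rw [this]
    exact MeasurableSet.biUnion (Finset.range (n+1)).countable_toSet fun k _ =>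
      measurableSet_le measurable_const ((hf.stronglyMeasurable k).measurable.le (𝒢.le k))
  have hA_mono : Monotone A := fun a b hab ω ⟨k, hk, h⟩ => ⟨k, hk.trans hab, h⟩
  have hunion : {ω | ∃ t : ℕ, ε ≤ f t ω} = ⋃ n, A n := by
    ext ω
    simp only [Set.mem_setOf_eq, Set.mem_iUnion, hA_def]
    exact ⟨fun ⟨t, ht⟩ => ⟨t, t, le_rfl, ht⟩, fun ⟨n, k, _, h⟩ => ⟨k, h⟩⟩
  have hkey : ∀ n, μ (A n) ≤ ENNReal.ofReal ((∫ ω, f 0 ω ∂μ) / ε) := by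
    intro n
    set σ : Ω → WithTop ℕ := fun ω => ((hittingBtwn f (Set.Ici ε) 0 n ω : ℕ) : WithTop ℕ) with hσ_def
    have hσ_st : IsStoppingTime 𝒢 σ := hf.stronglyAdapted.adapted.isStoppingTime_hittingBtwn measurableSet_Ici
    have hσ_le : ∀ ω, σ ω ≤ n := fun ω => WithTop.coe_le_coe.2 (hittingBtwn_le ω)
    have hsv_int : Integrable (stoppedValue f σ) μ :=
      integrable_stoppedValue ℕ hσ_st hf.integrable hσ_le
    have hsv_nonneg : ∀ ω, 0 ≤ stoppedValue f σ ω := fun ω => hnonneg _ ω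
    -- E[stoppedValue] ≤ E[f 0]
    have hexp : ∫ ω, stoppedValue f σ ω ∂μ ≤ ∫ ω, f 0 ω ∂μ := by
      have hsub : Submartingale (-f) 𝒢 μ := hf.neg
      have := hsub.expected_stoppedValue_mono (isStoppingTime_const 𝒢 0) hσ_st
        (fun ω => WithTop.coe_le_coe.2 (Nat.zero_le _)) hσ_le
      have h0 : stoppedValue (-f) (fun _ => ((0 : ℕ) : WithTop ℕ)) = fun ω => -(f 0 ω) := rfl
      have hσv : stoppedValue (-f) σ = fun ω => -(stoppedValue f σ ω) := rfl
      change ∫ ω, -(f 0 ω) ∂μ ≤ ∫ ω, -(stoppedValue f σ ω) ∂μ at this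
      rw [integral_neg, integral_neg, neg_le_neg_iff] at this
      exact this
    -- ε * μ (A n) ≤ E[stoppedValue]
    have hge : ∀ ω ∈ A n, ε ≤ stoppedValue f σ ω := by
      intro ω hω
      obtain ⟨k, hk, hεk⟩ := hω
      exact stoppedValue_hittingBtwn_mem ⟨k, ⟨Nat.zero_le _, hk⟩, hεk⟩
    have h1 : ε * (μ (A n)).toReal ≤ ∫ ω in A n, stoppedValue f σ ω ∂μ :=
      by have := setIntegral_ge_of_const_le (hA_meas n) (measure_ne_top μ _) hge hsv_int.integrableOn
         rwa [smul_eq_mul, mul_comm, measureReal_def] at this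
    have h2 : ∫ ω in A n, stoppedValue f σ ω ∂μ ≤ ∫ ω, stoppedValue f σ ω ∂μ :=
      setIntegral_le_integral hsv_int (Eventually.of_forall hsv_nonneg)
    have h3 : (μ (A n)).toReal ≤ (∫ ω, f 0 ω ∂μ) / ε :=
      (le_div_iff₀' hε).mpr ((h1.trans h2).trans hexp)
    calc μ (A n) = ENNReal.ofReal ((μ (A n)).toReal) :=
          (ENNReal.ofReal_toReal (measure_ne_top μ _)).symm
      _ ≤ ENNReal.ofReal ((∫ ω, f 0 ω ∂μ) / ε) := ENNReal.ofReal_le_ofReal h3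
  rw [hunion, Directed.measure_iUnion hA_mono.directed_le]
  exact iSup_le hkey

/-- Anytime-valid false alarm control: under the null (nonnegative e-values with
`E[e_t | F_{t−1}] ≤ 1` a.s.), the mixture e-process
`M_t = Σ_{τ=1}^t w_τ ∏_{s=τ}^t e_s`, `w_τ = 1/(τ(τ+1))`, crosses the threshold `1/α` at
some time `t ≥ 1` with probability at most `α`, for any `α ∈ (0,1]`. -/
theorem pitmonitor_anytime_valid
    {Ω : Type*} {m0 : MeasurableSpace Ω} (μ : Measure Ω) [IsProbabilityMeasure μ]
    (ℱ : Filtration ℕ m0) (e : ℕ → Ω → ℝ)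
    (he_nonneg : ∀ t ω, 0 ≤ e t ω)
    (he_int : ∀ t, Integrable (e t) μ)
    (he_meas : ∀ t, 1 ≤ t → StronglyMeasurable[ℱ t] (e t))
    (he_cond : ∀ t, 1 ≤ t → μ[e t | ℱ (t - 1)] ≤ᵐ[μ] fun _ => 1)
    (α : ℝ) (hα : α ∈ Set.Ioc (0 : ℝ) 1) :
    μ {ω | ∃ t : ℕ, 1 ≤ t ∧ 1 / α ≤
        ∑ τ ∈ Finset.Icc 1 t, (1 / ((τ : ℝ) * ((τ : ℝ) + 1))) * ∏ s ∈ Finset.Icc τ t, e s ω}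
      ≤ ENNReal.ofReal α := by
  obtain ⟨hα0, hα1⟩ := hα
  set w : ℕ → ℝ := fun τ => 1 / ((τ : ℝ) * ((τ : ℝ) + 1)) with hw_def
  set M : ℕ → Ω → ℝ := fun t ω => ∑ τ ∈ Finset.Icc 1 t, w τ * ∏ s ∈ Finset.Icc τ t, e s ω
    with hM_def
  set N : ℕ → Ω → ℝ := fun t ω => M t ω + 1 / ((t : ℝ) + 1) with hN_def
  have hw_nonneg : ∀ τ : ℕ, 1 ≤ τ → 0 ≤ w τ := by
    intro τ hτ
    have : (0 : ℝ) < τ := by exact_mod_cast hτ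
    positivity
  have hM_nonneg : ∀ t ω, 0 ≤ M t ω := by
    intro t ω
    refine Finset.sum_nonneg fun τ hτ => mul_nonneg (hw_nonneg τ (Finset.mem_Icc.mp hτ).1)
      (Finset.prod_nonneg fun s _ => he_nonneg s ω)
  have hN_nonneg : ∀ t ω, 0 ≤ N t ω := by
    intro t ω
    have : (0:ℝ) < (t:ℝ) + 1 := by positivity
    have := hM_nonneg t ω
    simp only [hN_def]
    positivity
  have hM_meas : ∀ t, StronglyMeasurable[ℱ t] (M t) := by
    intro t
    refine Finset.stronglyMeasurable_fun_sum _ fun τ hτ => StronglyMeasurable.fun_mul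
      stronglyMeasurable_const (Finset.stronglyMeasurable_fun_prod _ fun s hs => ?_)
    obtain ⟨hs1, hs2⟩ := Finset.mem_Icc.mp hs
    exact (he_meas s ((Finset.mem_Icc.mp hτ).1.trans hs1)).mono (ℱ.mono hs2)
  have hN_meas : ∀ t, StronglyMeasurable[ℱ t] (N t) := fun t =>
    (hM_meas t).add stronglyMeasurable_const
  -- recursion
  have hrec : ∀ t ω, N (t + 1) ω
      = (M t ω + w (t + 1)) * e (t + 1) ω + 1 / ((t : ℝ) + 2) := by
    intro t ω
    simp only [hN_def, hM_def]
    rw [Finset.sum_Icc_succ_top (Nat.succ_le_succ (Nat.zero_le t)), Finset.Icc_self,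
      Finset.prod_singleton]
    have hterm : ∑ τ ∈ Finset.Icc 1 t, w τ * ∏ s ∈ Finset.Icc τ (t + 1), e s ω
        = ∑ τ ∈ Finset.Icc 1 t, (w τ * ∏ s ∈ Finset.Icc τ t, e s ω) * e (t + 1) ω := by
      refine Finset.sum_congr rfl fun τ hτ => ?_
      rw [Finset.prod_Icc_succ_top (((Finset.mem_Icc.mp hτ).2).trans (Nat.le_succ t)), ← mul_assoc]
    rw [hterm, ← Finset.sum_mul]
    push_cast
    ring
  -- integrability
  have hN_int : ∀ t, Integrable (N t) μ := by
    intro t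
    induction t with
    | zero =>
        have : N 0 = fun _ => 1 := by
          funext ω; simp [hN_def, hM_def]
        rw [this]; exact integrable_const 1
    | succ t ih =>
        have hM_int : Integrable (M t) μ := by
          have : M t = fun ω => N t ω - 1 / ((t : ℝ) + 1) := by
            funext ω; simp [hN_def]
          rw [this]; exact ih.sub (integrable_const _)
        have hC_int : Integrable (fun ω => M t ω + w (t + 1)) μ :=
          hM_int.add (integrable_const _)
        have hC_meas : StronglyMeasurable[ℱ t] (fun ω => M t ω + w (t + 1)) :=
          (hM_meas t).add stronglyMeasurable_const
        have hC_nonneg : ∀ ω, 0 ≤ M t ω + w (t + 1) := fun ω =>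
          add_nonneg (hM_nonneg t ω) (hw_nonneg _ (Nat.succ_le_succ (Nat.zero_le t)))
        have hcond : μ[e (t + 1)|ℱ t] ≤ᵐ[μ] fun _ => 1 := by
          have := he_cond (t + 1) (Nat.succ_le_succ (Nat.zero_le t))
          simpa using this
        have hprod : Integrable (fun ω => (M t ω + w (t + 1)) * e (t + 1) ω) μ :=
          pitmonitor_mul_integrable (ℱ.le t) hC_meas hC_nonneg hC_int
            (he_nonneg (t + 1)) (he_int (t + 1)) hcond
        have : N (t + 1) = fun ω => (M t ω + w (t + 1)) * e (t + 1) ω + 1 / ((t : ℝ) + 2) := by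
          funext ω; exact hrec t ω
        rw [this]
        exact hprod.add (integrable_const _)
  -- supermartingale
  have hsuper : Supermartingale N ℱ μ := by
    refine supermartingale_nat (fun t => hN_meas t) hN_int fun t => ?_
    have hM_int : Integrable (M t) μ := by
      have : M t = fun ω => N t ω - 1 / ((t : ℝ) + 1) := by funext ω; simp [hN_def]
      rw [this]; exact (hN_int t).sub (integrable_const _)
    have hC_int : Integrable (fun ω => M t ω + w (t + 1)) μ := hM_int.add (integrable_const _)
    have hC_meas : StronglyMeasurable[ℱ t] (fun ω => M t ω + w (t + 1)) :=
      (hM_meas t).add stronglyMeasurable_const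
    have hC_nonneg : ∀ ω, 0 ≤ M t ω + w (t + 1) := fun ω =>
      add_nonneg (hM_nonneg t ω) (hw_nonneg _ (Nat.succ_le_succ (Nat.zero_le t)))
    have hcond : μ[e (t + 1)|ℱ t] ≤ᵐ[μ] fun _ => 1 := by
      simpa using he_cond (t + 1) (Nat.succ_le_succ (Nat.zero_le t))
    have hprod : Integrable (fun ω => (M t ω + w (t + 1)) * e (t + 1) ω) μ :=
      pitmonitor_mul_integrable (ℱ.le t) hC_meas hC_nonneg hC_int
        (he_nonneg (t + 1)) (he_int (t + 1)) hcond
    have hNe : N (t + 1)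
        = fun ω => (M t ω + w (t + 1)) * e (t + 1) ω + 1 / ((t : ℝ) + 2) := by
      funext ω; exact hrec t ω
    rw [hNe]
    calc μ[fun ω => (M t ω + w (t + 1)) * e (t + 1) ω + 1 / ((t : ℝ) + 2)|ℱ t]
        =ᵐ[μ] μ[fun ω => (M t ω + w (t + 1)) * e (t + 1) ω|ℱ t]
          + μ[fun _ => 1 / ((t : ℝ) + 2)|ℱ t] :=
          condExp_add hprod (integrable_const _) _
      _ =ᵐ[μ] fun ω => (M t ω + w (t + 1)) * (μ[e (t + 1)|ℱ t]) ω + 1 / ((t : ℝ) + 2) := by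
          refine EventuallyEq.add ?_ ?_
          · exact condExp_mul_of_stronglyMeasurable_left hC_meas hprod (he_int (t + 1))
          · exact Eventually.of_forall fun ω => congrFun (condExp_const (ℱ.le t) _) ω
      _ ≤ᵐ[μ] N t := by
          filter_upwards [hcond] with ω hω
          have h1 : (M t ω + w (t + 1)) * (μ[e (t + 1)|ℱ t]) ω ≤ M t ω + w (t + 1) := by
            calc (M t ω + w (t + 1)) * (μ[e (t + 1)|ℱ t]) ω
                ≤ (M t ω + w (t + 1)) * 1 := mul_le_mul_of_nonneg_left hω (hC_nonneg ω)
              _ = M t ω + w (t + 1) := mul_one _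
          have h2 : w (t + 1) + 1 / ((t : ℝ) + 2) = 1 / ((t : ℝ) + 1) := by
            simp only [hw_def]
            have h3 : ((t : ℝ) + 1) ≠ 0 := by positivity
            have h4 : ((t : ℝ) + 2) ≠ 0 := by positivity
            push_cast
            field_simp
            ring
          simp only [hN_def]
          linarith
  -- conclude via Ville
  have hsubset : {ω | ∃ t : ℕ, 1 ≤ t ∧ 1 / α ≤ M t ω} ⊆ {ω | ∃ t : ℕ, 1 / α ≤ N t ω} := by
    intro ω ⟨t, _, ht⟩
    refine ⟨t, ht.trans ?_⟩
    simp only [hN_def]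
    have : (0:ℝ) < (t:ℝ) + 1 := by positivity
    have := one_div_pos.mpr this
    linarith
  have hε : (0 : ℝ) < 1 / α := by positivity
  have hville := pitmonitor_ville hsuper hN_nonneg hε
  have hN0 : ∫ ω, N 0 ω ∂μ = 1 := by
    have : N 0 = fun _ => (1:ℝ) := by funext ω; simp [hN_def, hM_def]
    rw [this]; simp
  refine le_trans (measure_mono hsubset) (hville.trans ?_)
  rw [hN0, one_div_one_div]
end
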